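/- Let X be a real locally convex Hausdorff topological vector space with topological dual X*, let (f_i)_{i∈I} be a family of proper functions f_i : X → ℝ∪{+∞} whose robust sum f is proper, let x̄* ∈ X*, let (J,(x_j*)_{j∈J}) ∈ 𝔽(x̄*), and assume min(RP_{x̄*}) = sup(RD_{x̄*}) (the primal value is attained and equals the dual value). Then the following are equivalent: (i) (J,(x_j*)_{j∈J}) is an optimal solution of (RD_{x̄*}); (ii) for every x ∈ sol(RP_{x̄*}), one has J ∈ S_f(x) and x_j* ∈ ∂f_j(x) for all j ∈ J; (iii) there exists x ∈ sol(RP_{x̄*}) with J ∈ S_f(x) and x_j* ∈ ∂f_j(x) for all j ∈ J; (iv) there exists x ∈ X with J ∈ S_f(x) and x_j* ∈ ∂f_j(x) for all j ∈ J. Moreover, for any x ∈ sol(RP_{x̄*}), sol(RD_{x̄*}) = { (J,(x_j*)_{j∈J}) ∈ 𝔽(x̄*) : J ∈ S_f(x) and x_j* ∈ ∂f_j(x) for all j ∈ J }. -/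

import Mathlib

open scoped Pointwise Topology
open Set

noncomputable section

variable {X : Type*} [AddCommGroup X] [Module ℝ X] [TopologicalSpace X]
  [IsTopologicalAddGroup X] [ContinuousSMul ℝ X] [LocallyConvexSpace ℝ X] [T2Space X]
variable {ι : Type*}

/-- Fenchel conjugate of `f : X → ℝ ∪ {+∞}` (modeled as `EReal`-valued),
as a function on the topological dual (with its weak* topology). -/
def econj (f : X → EReal) (p : WeakDual ℝ X) : EReal := ⨆ x : X, (p x : EReal) - f x

/-- Effective domain. -/
def edom (f : X → EReal) : Set X := {x | f x ≠ ⊤}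

/-- Domain of the conjugate. -/
def edomStar (f : X → EReal) : Set (WeakDual ℝ X) := {p | econj f p ≠ ⊤}

/-- Epigraph of the conjugate. -/
def epiStar (f : X → EReal) : Set (WeakDual ℝ X × ℝ) := {q | econj f q.1 ≤ (q.2 : EReal)}

/-- Proper function: never `-∞`, not identically `+∞`. -/
def EProper (f : X → EReal) : Prop := (∀ x, f x ≠ ⊥) ∧ ∃ x, f x ≠ ⊤

/-- Convexity of an extended-real-valued function, via its epigraph. -/
def EConvexFn (f : X → EReal) : Prop := Convex ℝ {q : X × ℝ | f q.1 ≤ (q.2 : EReal)}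

/-- Robust sum of a family of functions. -/
def rsum (f : ι → X → EReal) (x : X) : EReal :=
  ⨆ (J : Finset ι) (_ : J.Nonempty), ∑ j ∈ J, f j x

/-- A set is weakly compact if it is compact in the weak topology `σ(X, X*)`. -/
def WCompact (K : Set X) : Prop := IsCompact (toWeakSpace ℝ X '' K)

/-- A subset of a topological space is locally compact if each of its points has
a compact neighborhood (within the set). -/
def IsLocCompactSet {Y : Type*} [TopologicalSpace Y] (S : Set Y) : Prop :=
  ∀ y ∈ S, ∃ K, K ⊆ S ∧ IsCompact K ∧ K ∈ nhdsWithin y S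

/-- `g` is weakly inf-locally compact if each sublevel set `[g ≤ r]` is
locally compact in the weak topology `σ(X, X*)`. -/
def WInfLocCompact (g : X → EReal) : Prop :=
  ∀ r : ℝ, IsLocCompactSet (toWeakSpace ℝ X '' {x | g x ≤ (r : EReal)})

/-- The cone generated by `B ∪ {0}`. -/
def coneHull {Z : Type*} [AddCommGroup Z] [Module ℝ Z] (B : Set Z) : Set Z :=
  {0} ∪ {z | ∃ c : ℝ, 0 < c ∧ ∃ b ∈ B, z = c • b}

/-- Optimal value of the primal problem `(RP_p)`. -/
def primalVal (f : X → EReal) (p : WeakDual ℝ X) : EReal := ⨅ x : X, f x - (p x : EReal)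

/-- Optimal solution set of the primal problem `(RP_p)`. -/
def primalSol (f : X → EReal) (p : WeakDual ℝ X) : Set X :=
  {x | f x - (p x : EReal) = primalVal f p}

/-- Feasibility for the dual problem `(RD_p)`. -/
def dualFeas (p : WeakDual ℝ X) (J : Finset ι) (xs : ι → WeakDual ℝ X) : Prop :=
  J.Nonempty ∧ ∑ j ∈ J, xs j = p

/-- Dual objective. -/
def dualObj (f : ι → X → EReal) (J : Finset ι) (xs : ι → WeakDual ℝ X) : EReal :=
  -∑ j ∈ J, econj (f j) (xs j)

/-- Optimal value of the dual problem `(RD_p)`. -/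
def dualVal (f : ι → X → EReal) (p : WeakDual ℝ X) : EReal :=
  ⨆ (J : Finset ι) (xs : ι → WeakDual ℝ X) (_ : dualFeas p J xs), dualObj f J xs

/-- Optimal solutions of the dual problem `(RD_p)`. -/
def dualSol (f : ι → X → EReal) (p : WeakDual ℝ X) (J : Finset ι)
    (xs : ι → WeakDual ℝ X) : Prop :=
  dualFeas p J xs ∧ dualObj f J xs = dualVal f p

/-- Subdifferential of `f` at `a`. -/
def esubdiff (f : X → EReal) (a : X) : Set (WeakDual ℝ X) :=
  {p | f a ≠ ⊥ ∧ f a ≠ ⊤ ∧ ∀ x, f a + ((p x - p a : ℝ) : EReal) ≤ f x}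

/-- `S_f(x)`: nonempty finite subsets realizing the robust sum at `x ∈ dom f`. -/
def Ssets (f : ι → X → EReal) (x : X) : Set (Finset ι) :=
  {J | J.Nonempty ∧ rsum f x ≠ ⊤ ∧ ∑ j ∈ J, f j x = rsum f x}

/-- `T_f(J)`, the inverse of `S_f`. -/
def Tset (f : ι → X → EReal) (J : Finset ι) : Set X := {x | J ∈ Ssets f x}

/-- `M_g(p) = argmin (g - ⟨p, ·⟩)` when `g*(p)` is finite, `∅` otherwise. -/
def Mmap (g : X → EReal) (p : WeakDual ℝ X) : Set X :=
  {x | econj g p ≠ ⊥ ∧ econj g p ≠ ⊤ ∧ ∀ y, g x - (p x : EReal) ≤ g y - (p y : EReal)}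

/-- Support function of a subset of the dual. -/
def suppFn (A : Set (WeakDual ℝ X)) (x : X) : EReal := ⨆ a ∈ A, ((a : WeakDual ℝ X) x : EReal)

/-- The function `φ` of (2.0). -/
def phiFun (f : ι → X → EReal) (p : WeakDual ℝ X) (q : WeakDual ℝ X) : EReal :=
  ⨅ (J : Finset ι) (xs : ι → WeakDual ℝ X) (_ : dualFeas (q + p) J xs),
    ∑ j ∈ J, econj (f j) (xs j)

/-- Subdifferential of a function on the dual, with subgradients in `X`. -/
def esubdiffStar (φ : WeakDual ℝ X → EReal) (q : WeakDual ℝ X) : Set X :=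
  {x | φ q ≠ ⊥ ∧ φ q ≠ ⊤ ∧ ∀ p : WeakDual ℝ X, φ q + ((p x - q x : ℝ) : EReal) ≤ φ p}


lemma coeSum (s : Finset ι) (r : ι → ℝ) : ((∑ j ∈ s, r j : ℝ) : EReal) = ∑ j ∈ s, (r j : EReal) :=
  map_sum (⟨⟨Real.toEReal, rfl⟩, EReal.coe_add⟩ : ℝ →+ EReal) r s

lemma sumApply (s : Finset ι) (xs : ι → WeakDual ℝ X) (x : X) :
    (∑ j ∈ s, xs j) x = ∑ j ∈ s, xs j x := by
  induction s using Finset.cons_induction with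
  | empty => rfl
  | cons j s hj ih => rw [Finset.sum_cons, Finset.sum_cons, ← ih]; rfl

lemma sumNeBot {s : Finset ι} {g : ι → EReal} (h : ∀ i ∈ s, g i ≠ ⊥) :
    ∑ i ∈ s, g i ≠ ⊥ := by
  induction s using Finset.cons_induction with
  | empty => simp
  | cons j s hj ih =>
    rw [Finset.sum_cons, Ne, EReal.add_eq_bot_iff]
    push_neg
    exact ⟨h j (Finset.mem_cons_self j s), ih fun i hi => h i (Finset.mem_cons_of_mem hi)⟩

lemma erealCases (v : EReal) : v = ⊥ ∨ (∃ r : ℝ, v = (r : EReal)) ∨ v = ⊤ := by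
  induction v using EReal.rec with
  | bot => exact Or.inl rfl
  | coe r => exact Or.inr (Or.inl ⟨r, rfl⟩)
  | top => exact Or.inr (Or.inr rfl)

lemma sumEqTop {s : Finset ι} {g : ι → EReal} (h : ∀ i ∈ s, g i ≠ ⊥) {j : ι}
    (hj : j ∈ s) (hjt : g j = ⊤) : ∑ i ∈ s, g i = ⊤ := by
  classical
  rw [← Finset.add_sum_erase s g hj, hjt]
  exact EReal.top_add_of_ne_bot (sumNeBot fun i hi => h i (Finset.mem_of_mem_erase hi))

lemma econj_ge (g : X → EReal) (q : WeakDual ℝ X) (x : X) :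
    (q x : EReal) - g x ≤ econj g q := le_iSup (fun x => (q x : EReal) - g x) x

lemma econj_ne_bot {g : X → EReal} (hg : EProper g) (q : WeakDual ℝ X) : econj g q ≠ ⊥ := by
  obtain ⟨x0, hx0⟩ := hg.2
  have hb := hg.1 x0
  obtain hv | ⟨r, hv⟩ | hv := erealCases (g x0)
  · exact absurd hv hb
  · have h1 := econj_ge g q x0
    rw [hv, ← EReal.coe_sub] at h1
    exact fun hc => (not_le.mpr (EReal.bot_lt_coe _)) (hc ▸ h1)
  · exact absurd hv hx0

/-- subdifferential gives conjugate equality -/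
lemma econj_of_subdiff {g : X → EReal} (hgbot : ∀ y, g y ≠ ⊥) {q : WeakDual ℝ X} {x : X}
    (h : q ∈ esubdiff g x) : econj g q = (q x : EReal) - g x := by
  obtain ⟨hb, ht, hsub⟩ := h
  refine le_antisymm (iSup_le fun y => ?_) (econj_ge g q x)
  obtain hgx | ⟨r, hgx⟩ | hgx := erealCases (g x)
  · exact absurd hgx hb
  · obtain hgy | ⟨sY, hgy⟩ | hgy := erealCases (g y)
    · exact absurd hgy (hgbot y)
    · have h2 := hsub y
      rw [hgx, hgy, ← EReal.coe_add, EReal.coe_le_coe_iff] at h2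
      rw [hgx, hgy, ← EReal.coe_sub, ← EReal.coe_sub, EReal.coe_le_coe_iff]
      linarith
    · simp [hgy]
  · exact absurd hgx ht

/-- conjugate equality (with finite value) gives subdifferential -/
lemma subdiff_of_econj {g : X → EReal} (hgbot : ∀ y, g y ≠ ⊥) {q : WeakDual ℝ X} {x : X}
    {r : ℝ} (hgx : g x = (r : EReal)) (h : econj g q ≤ ((q x - r : ℝ) : EReal)) :
    q ∈ esubdiff g x := by
  refine ⟨by simp [hgx], by simp [hgx], fun y => ?_⟩
  obtain hgy | ⟨sY, hgy⟩ | hgy := erealCases (g y)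
  · exact absurd hgy (hgbot y)
  · have h2 : (q y : EReal) - g y ≤ ((q x - r : ℝ) : EReal) := (econj_ge g q y).trans h
    rw [hgy, ← EReal.coe_sub, EReal.coe_le_coe_iff] at h2
    rw [hgx, hgy, ← EReal.coe_add, EReal.coe_le_coe_iff]
    linarith
  · simp [hgy]

lemma rsum_ge (f : ι → X → EReal) {J : Finset ι} (hJ : J.Nonempty) (x : X) :
    ∑ j ∈ J, f j x ≤ rsum f x :=
  le_iSup_of_le J (le_iSup_of_le hJ le_rfl)

lemma dualObj_le_dualVal (f : ι → X → EReal) {p : WeakDual ℝ X} {J : Finset ι}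
    {xs : ι → WeakDual ℝ X} (hfeas : dualFeas p J xs) : dualObj f J xs ≤ dualVal f p :=
  le_iSup_of_le J (le_iSup_of_le xs (le_iSup_of_le hfeas le_rfl))

/-- Key A: any `x` satisfying the optimality conditions yields dual optimality and
primal optimality of `x`. -/
lemma keyA (f : ι → X → EReal) (p : WeakDual ℝ X) (J : Finset ι) (xs : ι → WeakDual ℝ X)
    (hproper : ∀ i, EProper (f i)) (hfeas : dualFeas p J xs)
    (hgap : primalVal (rsum f) p = dualVal f p) (x : X)
    (hS : J ∈ Ssets f x) (hsub : ∀ j ∈ J, xs j ∈ esubdiff (f j) x) :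
    dualSol f p J xs ∧ x ∈ primalSol (rsum f) p := by
  obtain ⟨hJne, hsum⟩ := hfeas
  obtain ⟨-, hFtop, hsumJ⟩ := hS
  -- each f j x is finite
  have hr : ∀ j ∈ J, f j x = (((f j x).toReal : ℝ) : EReal) := fun j hj =>
    (EReal.coe_toReal (hsub j hj).2.1 (hsub j hj).1).symm
  set r : ι → ℝ := fun j => (f j x).toReal with hrdef
  -- conjugate equalities
  have hc : ∀ j ∈ J, econj (f j) (xs j) = ((xs j x - r j : ℝ) : EReal) := by
    intro j hj
    rw [econj_of_subdiff (hproper j).1 (hsub j hj), hr j hj, ← EReal.coe_sub]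
  -- sum of conjugates
  have hsum1 : ∑ j ∈ J, econj (f j) (xs j) = ((p x - ∑ j ∈ J, r j : ℝ) : EReal) := by
    rw [Finset.sum_congr rfl hc, ← coeSum, EReal.coe_eq_coe_iff, Finset.sum_sub_distrib,
      ← sumApply, hsum]
  -- F x is finite and equals sum of r
  have hFx : rsum f x = ((∑ j ∈ J, r j : ℝ) : EReal) := by
    rw [← hsumJ, Finset.sum_congr rfl hr, ← coeSum]
  -- dual objective value
  have hobj : dualObj f J xs = rsum f x - ((p x : ℝ) : EReal) := by
    rw [dualObj, hsum1, hFx, ← EReal.coe_sub, ← EReal.coe_neg, EReal.coe_eq_coe_iff]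
    ring
  have h1 : primalVal (rsum f) p ≤ rsum f x - ((p x : ℝ) : EReal) := iInf_le _ x
  have h2 : dualObj f J xs ≤ dualVal f p := dualObj_le_dualVal f ⟨hJne, hsum⟩
  rw [hobj] at h2
  rw [hgap] at h1
  have h3 : rsum f x - ((p x : ℝ) : EReal) = dualVal f p := le_antisymm h2 h1
  constructor
  · exact ⟨⟨hJne, hsum⟩, by rw [hobj, h3]⟩
  · show rsum f x - ((p x : ℝ) : EReal) = primalVal (rsum f) p
    rw [h3, hgap]

lemma primalSol_finite (f : ι → X → EReal) (p : WeakDual ℝ X) (hfproper : EProper (rsum f))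
    {x : X} (hx : x ∈ primalSol (rsum f) p) : ∃ m : ℝ, rsum f x = (m : EReal) := by
  obtain ⟨x0, hx0⟩ := hfproper.2
  have hx0b := hfproper.1 x0
  have hle : primalVal (rsum f) p ≤ ((((rsum f x0).toReal) - p x0 : ℝ) : EReal) := by
    have := iInf_le (fun y => rsum f y - ((p y : ℝ) : EReal)) x0
    rwa [← EReal.coe_toReal hx0 hx0b, ← EReal.coe_sub] at this
  have hxb := hfproper.1 x
  refine ⟨(rsum f x).toReal, (EReal.coe_toReal ?_ hxb).symm⟩
  intro htop
  have hxv : rsum f x - ((p x : ℝ) : EReal) = primalVal (rsum f) p := hx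
  rw [htop, EReal.top_sub_coe] at hxv
  rw [← hxv] at hle
  exact (not_le.mpr (EReal.coe_lt_top _)) hle

/-- Key B: dual optimality forces the optimality conditions at every primal solution. -/
lemma keyB (f : ι → X → EReal) (p : WeakDual ℝ X) (J : Finset ι) (xs : ι → WeakDual ℝ X)
    (hproper : ∀ i, EProper (f i)) (hfproper : EProper (rsum f))
    (hgap : primalVal (rsum f) p = dualVal f p) (hds : dualSol f p J xs) (x : X)
    (hx : x ∈ primalSol (rsum f) p) :
    J ∈ Ssets f x ∧ ∀ j ∈ J, xs j ∈ esubdiff (f j) x := by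
  obtain ⟨⟨hJne, hsum⟩, hobj⟩ := hds
  obtain ⟨m, hm⟩ := primalSol_finite f p hfproper hx
  have hxval : primalVal (rsum f) p = ((m - p x : ℝ) : EReal) := by
    have hxv : rsum f x - ((p x : ℝ) : EReal) = primalVal (rsum f) p := hx
    rw [hm, ← EReal.coe_sub] at hxv
    exact hxv.symm
  have hobj' : dualObj f J xs = ((m - p x : ℝ) : EReal) := by
    rw [hobj, ← hgap, hxval]
  have hS : ∑ j ∈ J, econj (f j) (xs j) = ((p x - m : ℝ) : EReal) := by
    rw [dualObj] at hobj'
    rw [← neg_neg (∑ j ∈ J, econj (f j) (xs j)), hobj', ← EReal.coe_neg,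
      EReal.coe_eq_coe_iff]
    ring
  -- conjugates are finite
  have hcb : ∀ j ∈ J, econj (f j) (xs j) ≠ ⊥ := fun j _ => econj_ne_bot (hproper j) (xs j)
  have hct : ∀ j ∈ J, econj (f j) (xs j) ≠ ⊤ := by
    intro j hj htop
    have := sumEqTop hcb hj htop
    rw [hS] at this
    exact EReal.coe_ne_top _ this
  have hcj : ∀ j ∈ J, econj (f j) (xs j) = (((econj (f j) (xs j)).toReal : ℝ) : EReal) :=
    fun j hj => (EReal.coe_toReal (hct j hj) (hcb j hj)).symm
  set c : ι → ℝ := fun j => (econj (f j) (xs j)).toReal with hcdef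
  -- f j x are finite
  have hab : ∀ j ∈ J, f j x ≠ ⊥ := fun j _ => (hproper j).1 x
  have hat : ∀ j ∈ J, f j x ≠ ⊤ := by
    intro j hj htop
    have h1 := sumEqTop hab hj htop
    have h2 := rsum_ge f hJne x
    rw [h1, hm, top_le_iff] at h2
    exact EReal.coe_ne_top _ h2
  have ha : ∀ j ∈ J, f j x = (((f j x).toReal : ℝ) : EReal) :=
    fun j hj => (EReal.coe_toReal (hat j hj) (hab j hj)).symm
  set a : ι → ℝ := fun j => (f j x).toReal with hadef
  -- real relations
  have hcsum : ∑ j ∈ J, c j = p x - m := by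
    rw [Finset.sum_congr rfl hcj, ← coeSum, EReal.coe_eq_coe_iff] at hS
    exact hS
  have hasum_le : ∑ j ∈ J, a j ≤ m := by
    have h2 := rsum_ge f hJne x
    rw [Finset.sum_congr rfl ha, ← coeSum, hm, EReal.coe_le_coe_iff] at h2
    exact h2
  have hcge : ∀ j ∈ J, xs j x - a j ≤ c j := by
    intro j hj
    have h3 := econj_ge (f j) (xs j) x
    rw [ha j hj, hcj j hj, ← EReal.coe_sub, EReal.coe_le_coe_iff] at h3
    exact h3
  have hs1 : ∑ j ∈ J, (xs j x - a j) = p x - ∑ j ∈ J, a j := by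
    rw [Finset.sum_sub_distrib, ← sumApply, hsum]
  have hsum_le : ∑ j ∈ J, (xs j x - a j) ≤ ∑ j ∈ J, c j := Finset.sum_le_sum hcge
  have hasum : ∑ j ∈ J, a j = m := by
    rw [hs1, hcsum] at hsum_le
    linarith
  have hEq : ∀ j ∈ J, xs j x - a j = c j := by
    refine (Finset.sum_eq_sum_iff_of_le hcge).1 ?_
    rw [hs1, hcsum, hasum]
  refine ⟨⟨hJne, by rw [hm]; exact EReal.coe_ne_top m, ?_⟩, fun j hj => ?_⟩
  · rw [Finset.sum_congr rfl ha, ← coeSum, hm, EReal.coe_eq_coe_iff]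
    exact hasum
  · refine subdiff_of_econj (hproper j).1 (ha j hj) ?_
    rw [hcj j hj]
    exact EReal.coe_le_coe_iff.mpr (le_of_eq (hEq j hj).symm)


/-- **Corollary 4.3.** Let all `f i` and `f` be proper, `(J, (x_j*)_{j ∈ J}) ∈ 𝔽(x̄*)`, and
assume `min(RP_{x̄*}) = sup(RD_{x̄*})` (the primal value is attained and equals the dual
value). Then (i) `(J, (x_j*)) ∈ sol(RD_{x̄*})`, (ii) every primal solution `x` satisfies
`J ∈ S_f(x)` and `x_j* ∈ ∂f_j(x)` for all `j ∈ J`, (iii) some primal solution does, and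
(iv) some `x ∈ X` does, are all equivalent; moreover, for any `x ∈ sol(RP_{x̄*})`,
`sol(RD_{x̄*})` is exactly the set of feasible `(J, (x_j*))` satisfying these conditions. -/
theorem dual_solution_characterization [Nonempty ι] (f : ι → X → EReal) (p : WeakDual ℝ X)
    (J : Finset ι) (xs : ι → WeakDual ℝ X)
    (hproper : ∀ i, EProper (f i)) (hfproper : EProper (rsum f))
    (hfeas : dualFeas p J xs)
    (hattained : (primalSol (rsum f) p).Nonempty)
    (hgap : primalVal (rsum f) p = dualVal f p) :
    ((dualSol f p J xs ↔
        ∀ x ∈ primalSol (rsum f) p, J ∈ Ssets f x ∧ ∀ j ∈ J, xs j ∈ esubdiff (f j) x) ∧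
      (dualSol f p J xs ↔
        ∃ x ∈ primalSol (rsum f) p, J ∈ Ssets f x ∧ ∀ j ∈ J, xs j ∈ esubdiff (f j) x) ∧
      (dualSol f p J xs ↔
        ∃ x : X, J ∈ Ssets f x ∧ ∀ j ∈ J, xs j ∈ esubdiff (f j) x)) ∧
    (∀ x ∈ primalSol (rsum f) p,
      ∀ (J' : Finset ι) (xs' : ι → WeakDual ℝ X),
        dualSol f p J' xs' ↔
          (dualFeas p J' xs' ∧ J' ∈ Ssets f x ∧ ∀ j ∈ J', xs' j ∈ esubdiff (f j) x)) := by
  have hA := fun (J' : Finset ι) (xs' : ι → WeakDual ℝ X) (hf' : dualFeas p J' xs')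
      (x : X) (hS : J' ∈ Ssets f x) (hsub : ∀ j ∈ J', xs' j ∈ esubdiff (f j) x) =>
    keyA f p J' xs' hproper hf' hgap x hS hsub
  have hB := fun (J' : Finset ι) (xs' : ι → WeakDual ℝ X)
      (hds : dualSol f p J' xs') (x : X) (hx : x ∈ primalSol (rsum f) p) =>
    keyB f p J' xs' hproper hfproper hgap hds x hx
  obtain ⟨x0, hx0⟩ := hattained
  refine ⟨⟨⟨fun hds x hx => hB J xs hds x hx, fun h => ?_⟩,
      ⟨fun hds => ⟨x0, hx0, hB J xs hds x0 hx0⟩, fun ⟨x, _, hS, hsub⟩ =>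
        (hA J xs hfeas x hS hsub).1⟩,
      ⟨fun hds => ⟨x0, hB J xs hds x0 hx0⟩, fun ⟨x, hS, hsub⟩ =>
        (hA J xs hfeas x hS hsub).1⟩⟩,
    fun x hx J' xs' => ⟨fun hds => ⟨hds.1, hB J' xs' hds x hx⟩,
      fun ⟨hf', hS, hsub⟩ => (hA J' xs' hf' x hS hsub).1⟩⟩
  obtain ⟨hS, hsub⟩ := h x0 hx0
  exact (hA J xs hfeas x0 hS hsub).1
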